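/- Let K be a field and R = K[[x_1, ..., x_r]] the formal power series ring. For f ∈ R and a ≥ 1, define res_a(f) to be the coefficient of x_1^{a-1}···x_r^{a-1} in f. If f ≡ c·x_1^{a-1}···x_r^{a-1} mod (x_1^a, ..., x_r^a) for some c ∈ K, then for every g ∈ R, res_a(g·f) = g(0)·c, where g(0) is the constant term of g. -/

import Mathlib

/-- Residues against a rectified form are evaluation-linear: in `K[[x₁,...,x_r]]`, if
`f ≡ c·x₁^{a-1}⋯x_r^{a-1} mod (x₁^a,...,x_r^a)`, then for every `g`, the coefficient of
`x₁^{a-1}⋯x_r^{a-1}` in `g·f` equals `g(0)·c`. -/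
theorem coeff_mul_of_rectified (K : Type*) [Field K] (r : ℕ) (a : ℕ) (ha : 1 ≤ a)
    (f : MvPowerSeries (Fin r) K) (c : K)
    (hf : f - MvPowerSeries.monomial (Finsupp.equivFunOnFinite.symm fun _ => a - 1) c ∈
      Ideal.span (Set.range fun i : Fin r => (MvPowerSeries.X i) ^ a)) :
    ∀ g : MvPowerSeries (Fin r) K,
      MvPowerSeries.coeff (Finsupp.equivFunOnFinite.symm fun _ => a - 1) (g * f) =
        MvPowerSeries.constantCoeff g * c := by
  classical
  intro g
  set d : Fin r →₀ ℕ := Finsupp.equivFunOnFinite.symm fun _ => a - 1 with hd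
  set h : MvPowerSeries (Fin r) K := f - MvPowerSeries.monomial d c with hh
  have hdi : ∀ i, d i = a - 1 := fun i => rfl
  -- every coefficient of an element of the ideal vanishes at d
  have hvanish : MvPowerSeries.coeff d (g * h) = 0 := by
    have hmem : g * h ∈ Ideal.span (Set.range fun i : Fin r => (MvPowerSeries.X i) ^ a) :=
      Ideal.mul_mem_left _ g hf
    obtain ⟨q, hq⟩ := (Submodule.mem_span_range_iff_exists_fun _).mp hmem
    rw [← hq, map_sum]
    refine Finset.sum_eq_zero fun i _ => ?_
    rw [smul_eq_mul, MvPowerSeries.X_pow_eq, MvPowerSeries.coeff_mul_monomial]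
    rw [if_neg]
    intro hle
    have := hle i
    simp only [Finsupp.single_apply, if_pos rfl, if_true] at this
    rw [hdi i] at this
    omega
  have hsplit : g * f = g * h + g * MvPowerSeries.monomial d c := by
    rw [hh]; ring
  rw [hsplit, map_add, hvanish, zero_add, MvPowerSeries.coeff_mul_monomial, if_pos le_rfl,
    tsub_self]
  rfl
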